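/- For every complex-valued Schwartz function ψ on ℝ, the function Φ defined by Φ(λ) = ψ(λ − 1/λ) for λ > 0 and Φ(λ) = 0 for λ ≤ 0 is a Schwartz function on ℝ (vanishing at every λ ≤ 0). -/

import Mathlib

open Filter Topology

namespace SchwartzChart

variable (ψ : SchwartzMap ℝ ℂ)

/-- evaluation of a single term `c * ψ^(j) (l - 1/l) * (1/l)^m`. -/
noncomputable def tval (t : ℂ × ℕ × ℕ) (l : ℝ) : ℂ :=
  t.1 * iteratedDeriv t.2.1 (⇑ψ) (l - l⁻¹) * ((l⁻¹ ^ t.2.2 : ℝ) : ℂ)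

noncomputable def leval (L : List (ℂ × ℕ × ℕ)) (l : ℝ) : ℂ :=
  (L.map fun t => tval ψ t l).sum

def dstep (L : List (ℂ × ℕ × ℕ)) : List (ℂ × ℕ × ℕ) :=
  L.flatMap fun t =>
    [(t.1, t.2.1 + 1, t.2.2), (t.1, t.2.1 + 1, t.2.2 + 2),
      (-(t.2.2 : ℂ) * t.1, t.2.1, t.2.2 + 1)]

noncomputable def Dn (n : ℕ) : List (ℂ × ℕ × ℕ) := dstep^[n] [(1, 0, 0)]

noncomputable def Fn (n : ℕ) (l : ℝ) : ℂ := if 0 < l then leval ψ (Dn n) l else 0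

lemma leval_cons (t : ℂ × ℕ × ℕ) (L : List (ℂ × ℕ × ℕ)) (l : ℝ) :
    leval ψ (t :: L) l = tval ψ t l + leval ψ L l := by
  simp [leval]

lemma leval_append (L₁ L₂ : List (ℂ × ℕ × ℕ)) (l : ℝ) :
    leval ψ (L₁ ++ L₂) l = leval ψ L₁ l + leval ψ L₂ l := by
  simp [leval]

lemma psi_iteratedDeriv_hasDerivAt (j : ℕ) (y : ℝ) :
    HasDerivAt (iteratedDeriv j (⇑ψ)) (iteratedDeriv (j + 1) (⇑ψ) y) y := by
  have hd : Differentiable ℝ (iteratedDeriv j (⇑ψ)) := by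
    refine (ψ.smooth ⊤).differentiable_iteratedDeriv j ?_
    exact_mod_cast ENat.coe_lt_top j
  have := (hd y).hasDerivAt
  rwa [show deriv (iteratedDeriv j (⇑ψ)) y = iteratedDeriv (j + 1) (⇑ψ) y by
    rw [iteratedDeriv_succ]] at this

/-- Derivative of a single term, for `l > 0`. -/
lemma tval_hasDerivAt (t : ℂ × ℕ × ℕ) {l : ℝ} (hl : 0 < l) :
    HasDerivAt (tval ψ t)
      (tval ψ (t.1, t.2.1 + 1, t.2.2) l + tval ψ (t.1, t.2.1 + 1, t.2.2 + 2) l +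
        tval ψ (-(t.2.2 : ℂ) * t.1, t.2.1, t.2.2 + 1) l) l := by
  obtain ⟨c, j, m⟩ := t
  have hl0 : l ≠ 0 := ne_of_gt hl
  -- inner map l ↦ l - l⁻¹
  have hσ : HasDerivAt (fun x : ℝ => x - x⁻¹) (1 - -(l ^ 2)⁻¹) l :=
    (hasDerivAt_id l).sub (hasDerivAt_inv hl0)
  have hcomp : HasDerivAt (fun x : ℝ => iteratedDeriv j (⇑ψ) (x - x⁻¹))
      ((1 - -(l ^ 2)⁻¹) • iteratedDeriv (j + 1) (⇑ψ) (l - l⁻¹)) l :=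
    (psi_iteratedDeriv_hasDerivAt ψ j (l - l⁻¹)).scomp l (h := fun x : ℝ => x - x⁻¹) hσ
  -- power of inverse
  have hinv : HasDerivAt (fun x : ℝ => x⁻¹ ^ m)
      ((m : ℝ) * (l⁻¹) ^ (m - 1) * -(l ^ 2)⁻¹) l :=
    (hasDerivAt_pow m l⁻¹).comp l (hasDerivAt_inv hl0)
  have hinvC : HasDerivAt (fun x : ℝ => ((x⁻¹ ^ m : ℝ) : ℂ))
      (((m : ℝ) * (l⁻¹) ^ (m - 1) * -(l ^ 2)⁻¹ : ℝ) : ℂ) l := hinv.ofReal_comp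
  have hmul := (hcomp.const_mul c).mul hinvC
  have harr : HasDerivAt (tval ψ (c, j, m))
      (c * ((1 - -(l ^ 2)⁻¹) • iteratedDeriv (j + 1) (⇑ψ) (l - l⁻¹)) * ((l⁻¹ ^ m : ℝ) : ℂ)
        + c * iteratedDeriv j (⇑ψ) (l - l⁻¹) *
          (((m : ℝ) * (l⁻¹) ^ (m - 1) * -(l ^ 2)⁻¹ : ℝ) : ℂ)) l := hmul
  convert harr using 1
  simp only [tval, Complex.real_smul, Complex.ofReal_sub, Complex.ofReal_neg, Complex.ofReal_inv,
    Complex.ofReal_pow, Complex.ofReal_mul, Complex.ofReal_one, Complex.ofReal_natCast]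
  have hlC : (l : ℂ) ≠ 0 := by exact_mod_cast hl0
  rcases Nat.eq_zero_or_pos m with hm | hm
  · subst hm; push_cast; field_simp; ring
  · obtain ⟨k, rfl⟩ : ∃ k, m = k + 1 := ⟨m - 1, by omega⟩
    simp only [Nat.add_sub_cancel]
    push_cast
    generalize iteratedDeriv (j + 1) (⇑ψ) (l - l⁻¹) = A
    generalize iteratedDeriv j (⇑ψ) (l - l⁻¹) = B
    rw [← inv_pow]
    generalize (l : ℂ)⁻¹ = u
    ring

lemma leval_hasDerivAt (L : List (ℂ × ℕ × ℕ)) {l : ℝ} (hl : 0 < l) :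
    HasDerivAt (leval ψ L) (leval ψ (dstep L) l) l := by
  induction L with
  | nil => exact hasDerivAt_const l (0 : ℂ)
  | cons t L ih =>
      have h1 := (tval_hasDerivAt ψ t hl).add ih
      have heq : dstep (t :: L) =
          [(t.1, t.2.1 + 1, t.2.2), (t.1, t.2.1 + 1, t.2.2 + 2),
            (-(t.2.2 : ℂ) * t.1, t.2.1, t.2.2 + 1)] ++ dstep L := by
        simp [dstep]
      have : HasDerivAt (fun l => leval ψ (t :: L) l)
          (tval ψ (t.1, t.2.1 + 1, t.2.2) l + tval ψ (t.1, t.2.1 + 1, t.2.2 + 2) l +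
            tval ψ (-(t.2.2 : ℂ) * t.1, t.2.1, t.2.2 + 1) l + leval ψ (dstep L) l) l := by
        refine HasDerivAt.congr_of_eventuallyEq h1 ?_
        filter_upwards with x using (leval_cons ψ t L x).symm
      rw [heq]
      convert this using 1
      simp [leval_append, leval, leval_cons]
      ring

/-- Key inequalities: for `0 < l`, both `l` and `l⁻¹` are `≤ 1 + |l - l⁻¹|`. -/
lemma le_one_add_abs {l : ℝ} (hl : 0 < l) :
    l ≤ 1 + |l - l⁻¹| ∧ l⁻¹ ≤ 1 + |l - l⁻¹| := by
  rcases le_or_gt 1 l with h | h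
  · have hinv : l⁻¹ ≤ 1 := inv_le_one_of_one_le₀ h
    have h0 : 0 ≤ l - l⁻¹ := by
      have : l⁻¹ ≤ l := hinv.trans h
      linarith
    rw [abs_of_nonneg h0]
    constructor
    · linarith [inv_pos.2 hl]
    · linarith [inv_pos.2 hl, hinv]
  · have h1 : l ≤ 1 := h.le
    have hinv : 1 ≤ l⁻¹ := (one_le_inv₀ hl).2 h1
    have h0 : l - l⁻¹ ≤ 0 := by linarith [hinv.trans_eq rfl, h1]
    rw [abs_of_nonpos h0]
    constructor
    · linarith
    · linarith

/-- Uniform Schwartz bound for iterated derivatives with a polynomial weight. -/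
lemma schwartz_bound (j p : ℕ) :
    ∃ C : ℝ, 0 ≤ C ∧ ∀ y : ℝ, (1 + |y|) ^ p * ‖iteratedDeriv j (⇑ψ) y‖ ≤ C := by
  obtain ⟨C0, hC0⟩ := ψ.decay' 0 j
  obtain ⟨C1, hC1⟩ := ψ.decay' p j
  refine ⟨2 ^ p * (max C0 0 + max C1 0), by positivity, fun y => ?_⟩
  · have hn : ‖iteratedDeriv j (⇑ψ) y‖ = ‖iteratedFDeriv ℝ j (⇑ψ) y‖ :=
      (norm_iteratedFDeriv_eq_norm_iteratedDeriv).symm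
    have h0 := hC0 y
    have h1 := hC1 y
    simp only [pow_zero, one_mul] at h0
    have hb : (1 + |y|) ^ p ≤ 2 ^ p * (1 + |y| ^ p) := by
      have h2 : 1 + |y| ≤ 2 * max 1 |y| := by
        rcases le_total 1 |y| with h | h
        · rw [max_eq_right h]; linarith
        · rw [max_eq_left h]; linarith [abs_nonneg y]
      calc (1 + |y|) ^ p ≤ (2 * max 1 |y|) ^ p := by
            apply pow_le_pow_left₀ (by positivity) h2
        _ = 2 ^ p * (max 1 |y|) ^ p := by rw [mul_pow]
        _ ≤ 2 ^ p * (1 + |y| ^ p) := by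
            gcongr
            rcases le_total 1 |y| with h | h
            · rw [max_eq_right h]; nlinarith [abs_nonneg y]
            · rw [max_eq_left h, one_pow]
              nlinarith [pow_nonneg (abs_nonneg y) p]
    have hg0 : 0 ≤ ‖iteratedDeriv j (⇑ψ) y‖ := norm_nonneg _
    calc (1 + |y|) ^ p * ‖iteratedDeriv j (⇑ψ) y‖
        ≤ (2 ^ p * (1 + |y| ^ p)) * ‖iteratedDeriv j (⇑ψ) y‖ := by gcongr
      _ = 2 ^ p * (‖iteratedDeriv j (⇑ψ) y‖ + |y| ^ p * ‖iteratedDeriv j (⇑ψ) y‖) := by ring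
      _ ≤ 2 ^ p * (max C0 0 + max C1 0) := by
          gcongr
          · rw [hn]; exact h0.trans (le_max_left _ _)
          · rw [hn, ← Real.norm_eq_abs]; exact h1.trans (le_max_left _ _)

/-- Master estimate for one term. -/
lemma tval_bound (t : ℂ × ℕ × ℕ) (k q : ℕ) :
    ∃ C : ℝ, 0 ≤ C ∧ ∀ l : ℝ, 0 < l → l ^ k * ‖tval ψ t l‖ ≤ C * l ^ q := by
  obtain ⟨c, j, m⟩ := t
  obtain ⟨C, hC0, hC⟩ := schwartz_bound ψ j (k + m + q)
  refine ⟨‖c‖ * C, by positivity, fun l hl => ?_⟩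
  obtain ⟨hA, hB⟩ := le_one_add_abs hl
  set y := l - l⁻¹ with hy
  have h1 : 0 < 1 + |y| := by positivity
  have hnorm : ‖tval ψ (c, j, m) l‖ = ‖c‖ * ‖iteratedDeriv j (⇑ψ) y‖ * l⁻¹ ^ m := by
    simp [tval, norm_mul, abs_of_nonneg (le_of_lt (inv_pos.2 hl)), abs_pow, abs_of_pos hl, y]
  rw [hnorm]
  have hlk : l ^ k ≤ (1 + |y|) ^ k := pow_le_pow_left₀ hl.le hA k
  have hinv : l⁻¹ ^ m ≤ (1 + |y|) ^ m * 1 := by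
    rw [mul_one]; exact pow_le_pow_left₀ (inv_pos.2 hl).le hB m
  -- l⁻¹ ^ 0 extra: we need  l^k * l⁻¹^m ≤ (1+|y|)^(k+m+q) * l^q
  have hkey : l ^ k * l⁻¹ ^ m ≤ (1 + |y|) ^ (k + m + q) * l ^ q := by
    have hq : (1:ℝ) ≤ (1 + |y|) ^ q * l ^ q := by
      have : l⁻¹ ^ q ≤ (1 + |y|) ^ q := pow_le_pow_left₀ (inv_pos.2 hl).le hB q
      have hl' : 0 < l ^ q := pow_pos hl q
      calc (1:ℝ) = l⁻¹ ^ q * l ^ q := by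
            rw [← mul_pow, inv_mul_cancel₀ (ne_of_gt hl), one_pow]
        _ ≤ (1 + |y|) ^ q * l ^ q := by gcongr
    calc l ^ k * l⁻¹ ^ m ≤ (1 + |y|) ^ k * (1 + |y|) ^ m := by
          exact mul_le_mul hlk (pow_le_pow_left₀ (inv_pos.2 hl).le hB m) (by positivity) (by positivity)
      _ = (1 + |y|) ^ (k + m) * 1 := by rw [pow_add, mul_one]
      _ ≤ (1 + |y|) ^ (k + m) * ((1 + |y|) ^ q * l ^ q) := by
          gcongr
      _ = (1 + |y|) ^ (k + m + q) * l ^ q := by rw [pow_add]; ring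
  calc l ^ k * (‖c‖ * ‖iteratedDeriv j (⇑ψ) y‖ * l⁻¹ ^ m)
      = ‖c‖ * (‖iteratedDeriv j (⇑ψ) y‖ * (l ^ k * l⁻¹ ^ m)) := by ring
    _ ≤ ‖c‖ * (‖iteratedDeriv j (⇑ψ) y‖ * ((1 + |y|) ^ (k + m + q) * l ^ q)) := by
        gcongr
    _ = (‖iteratedDeriv j (⇑ψ) y‖ * (1 + |y|) ^ (k + m + q)) * (‖c‖ * l ^ q) := by ring
    _ ≤ C * (‖c‖ * l ^ q) := by
        gcongr
        rw [mul_comm]; exact hC y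
    _ = ‖c‖ * C * l ^ q := by ring

lemma leval_bound (L : List (ℂ × ℕ × ℕ)) (k q : ℕ) :
    ∃ C : ℝ, 0 ≤ C ∧ ∀ l : ℝ, 0 < l → l ^ k * ‖leval ψ L l‖ ≤ C * l ^ q := by
  induction L with
  | nil => exact ⟨0, le_refl _, fun l hl => by simp [leval]⟩
  | cons t L ih =>
      obtain ⟨C1, hC10, hC1⟩ := tval_bound ψ t k q
      obtain ⟨C2, hC20, hC2⟩ := ih
      refine ⟨C1 + C2, by positivity, fun l hl => ?_⟩
      rw [leval_cons]
      calc l ^ k * ‖tval ψ t l + leval ψ L l‖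
          ≤ l ^ k * (‖tval ψ t l‖ + ‖leval ψ L l‖) := by
            gcongr; exact norm_add_le _ _
        _ = l ^ k * ‖tval ψ t l‖ + l ^ k * ‖leval ψ L l‖ := by ring
        _ ≤ C1 * l ^ q + C2 * l ^ q := add_le_add (hC1 l hl) (hC2 l hl)
        _ = (C1 + C2) * l ^ q := by ring

lemma Fn_eq_zero {n : ℕ} {l : ℝ} (hl : l ≤ 0) : Fn ψ n l = 0 := by
  simp [Fn, not_lt.2 hl]

lemma Fn_hasDerivAt (n : ℕ) (x : ℝ) : HasDerivAt (Fn ψ n) (Fn ψ (n + 1) x) x := by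
  have hDn : Dn (n + 1) = dstep (Dn n) := Function.iterate_succ_apply' dstep n _
  rcases lt_trichotomy x 0 with hx | hx | hx
  · -- negative: locally zero
    have hev : Fn ψ n =ᶠ[𝓝 x] fun _ => (0 : ℂ) := by
      filter_upwards [Iio_mem_nhds hx] with y hy
      exact Fn_eq_zero ψ (le_of_lt hy)
    rw [Fn_eq_zero ψ (le_of_lt hx)]
    exact (hasDerivAt_const x (0 : ℂ)).congr_of_eventuallyEq hev
  · -- zero: slope squeeze
    subst hx
    rw [hasDerivAt_iff_tendsto_slope]
    obtain ⟨C, hC0, hC⟩ := leval_bound ψ (Dn n) 0 2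
    rw [Fn_eq_zero ψ (le_refl 0)]
    have hbound : ∀ᶠ l in 𝓝[≠] (0:ℝ), ‖slope (Fn ψ n) 0 l‖ ≤ C * |l| := by
      filter_upwards [self_mem_nhdsWithin] with l (hl : l ≠ 0)
      rcases lt_or_ge 0 l with h | h
      · have hb := hC l h
        simp only [pow_zero, one_mul, pow_two] at hb
        have : ‖slope (Fn ψ n) 0 l‖ = l⁻¹ * ‖leval ψ (Dn n) l‖ := by
          simp [slope, Fn, h, norm_smul, abs_of_pos (inv_pos.2 h), abs_of_pos h]
        rw [this, abs_of_pos h]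
        rw [inv_mul_le_iff₀ h]
        calc ‖leval ψ (Dn n) l‖ ≤ C * (l * l) := hb
          _ = l * (C * l) := by ring
      · have : slope (Fn ψ n) 0 l = 0 := by
          simp [slope, Fn_eq_zero ψ h, Fn_eq_zero ψ (le_refl (0:ℝ))]
        rw [this]
        simp only [norm_zero]
        positivity
    have htend : Tendsto (fun l : ℝ => C * |l|) (𝓝[≠] (0:ℝ)) (𝓝 0) := by
      have : Tendsto (fun l : ℝ => C * |l|) (𝓝 0) (𝓝 (C * |0|)) :=
        (continuous_const.mul continuous_abs).tendsto 0
      simp only [abs_zero, mul_zero] at this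
      exact this.mono_left nhdsWithin_le_nhds
    exact squeeze_zero_norm' hbound htend
  · -- positive
    have hev : Fn ψ n =ᶠ[𝓝 x] leval ψ (Dn n) := by
      filter_upwards [Ioi_mem_nhds hx] with y hy
      simp [Fn, show (0:ℝ) < y from hy]
    have h1 := leval_hasDerivAt ψ (Dn n) hx
    rw [← hDn] at h1
    have : Fn ψ (n + 1) x = leval ψ (Dn (n + 1)) x := by simp [Fn, hx]
    rw [this]
    exact h1.congr_of_eventuallyEq hev

lemma iteratedDeriv_Fn (n : ℕ) : iteratedDeriv n (Fn ψ 0) = Fn ψ n := by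
  induction n with
  | zero => simp
  | succ n ih =>
      rw [iteratedDeriv_succ, ih]
      funext x
      exact (Fn_hasDerivAt ψ n x).deriv

lemma Fn_smooth : ContDiff ℝ (⊤ : ℕ∞) (Fn ψ 0) := by
  apply contDiff_of_differentiable_iteratedDeriv
  intro m _
  rw [iteratedDeriv_Fn]
  exact fun x => (Fn_hasDerivAt ψ m x).differentiableAt

lemma Fn_decay (k n : ℕ) : ∃ C : ℝ, ∀ x : ℝ, ‖x‖ ^ k * ‖iteratedFDeriv ℝ n (Fn ψ 0) x‖ ≤ C := by
  obtain ⟨C, hC0, hC⟩ := leval_bound ψ (Dn n) k 0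
  refine ⟨C, fun x => ?_⟩
  rw [norm_iteratedFDeriv_eq_norm_iteratedDeriv, iteratedDeriv_Fn]
  rcases lt_or_ge 0 x with h | h
  · have hb := hC x h
    simp only [pow_zero, mul_one] at hb
    simpa [Fn, h, Real.norm_eq_abs, abs_of_pos h] using hb
  · rw [Fn_eq_zero ψ h]
    simp
    positivity

end SchwartzChart

open SchwartzChart in
/-- For any Schwartz function `ψ` on `ℝ`, the function `Φ` with
`Φ λ = ψ (λ - 1/λ)` for `λ > 0` and `Φ λ = 0` for `λ ≤ 0` is a Schwartz function on `ℝ`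
vanishing at every `λ ≤ 0`. -/
theorem schwartz_comp_chart_of_schwartz (ψ : SchwartzMap ℝ ℂ) :
    ∃ Φ : SchwartzMap ℝ ℂ,
      (∀ l : ℝ, l ≤ 0 → Φ l = 0) ∧ ∀ l : ℝ, 0 < l → Φ l = ψ (l - 1 / l) := by
  refine ⟨⟨Fn ψ 0, Fn_smooth ψ, Fn_decay ψ⟩, fun l hl => Fn_eq_zero ψ hl, fun l hl => ?_⟩
  show Fn ψ 0 l = ψ (l - 1 / l)
  simp [Fn, hl, Dn, leval, tval, one_div]
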